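/- Let X, Z be finite sets of cardinality n with symmetric non-negative functions, f : X → Z a bijection, and M_f the induced block function. Then for every a ∈ ℝ≥0, the sum over all b ∈ ℝ≥0 of M_f(a,b) equals m^X(a), the multiplicity of death value a in the barcode of X (i.e., the number of generators of H_0(VR_0(X)) in the triplet merge tree that die at value a). Symmetrically, for every b ∈ ℝ≥0, the sum over all a of M_f(a,b) equals m^Z(b). -/

import Mathlib

open scoped NNReal
open Module

/-- 1-skeleton of the Vietoris–Rips filtration of `(Z, d)`: edgeless at `r = 0`;
for `r > 0` it has an edge between distinct points at distance at most `r`.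
(The adjacency is symmetrized; for symmetric `d` this agrees with the usual definition.) -/
def VR {Z : Type*} (d : Z → Z → ℝ≥0) (r : ℝ≥0) : SimpleGraph Z where
  Adj z z' := z ≠ z' ∧ 0 < r ∧ d z z' ≤ r ∧ d z' z ≤ r
  symm := by constructor; intro z z' h; exact ⟨h.1.symm, h.2.1, h.2.2.2, h.2.2.1⟩
  loopless := by constructor; intro z h; exact h.1 rfl

/-- "Closed" Vietoris–Rips graph, used for `ker⁺`: at `r = 0` it has the edges between
distinct points at distance `0`; for `r > 0` it coincides with `VR d r`. -/
def VRc {Z : Type*} (d : Z → Z → ℝ≥0) (r : ℝ≥0) : SimpleGraph Z where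
  Adj z z' := z ≠ z' ∧ d z z' ≤ r ∧ d z' z ≤ r
  symm := by constructor; intro z z' h; exact ⟨h.1.symm, h.2.2, h.2.1⟩
  loopless := by constructor; intro z h; exact h.1 rfl

lemma VR_mono {Z : Type*} (d : Z → Z → ℝ≥0) {r s : ℝ≥0} (hrs : r ≤ s) :
    VR d r ≤ VR d s := by
  intro a b hab
  exact ⟨hab.1, hab.2.1.trans_le hrs, hab.2.2.1.trans hrs, hab.2.2.2.trans hrs⟩

/-- The structure map `ρ` from `H₀` of the edgeless graph on `Z` (the free `𝔽₂`-vector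
space on `Z`, identified with `Z → 𝔽₂`) to `H₀(G)` (the free `𝔽₂`-vector space on the
connected components of `G`), summing the coefficients over each connected component. -/
noncomputable def rho {Z : Type*} [Fintype Z] (G : SimpleGraph Z) :
    (Z → ZMod 2) →ₗ[ZMod 2] (G.ConnectedComponent → ZMod 2) where
  toFun v c :=
    ∑ z ∈ @Finset.filter _ (fun z => G.connectedComponentMk z = c)
      (Classical.decPred _) Finset.univ, v z
  map_add' := by
    intro v w; funext c; simp [Finset.sum_add_distrib]
  map_smul' := by
    intro m v; funext c; simp [Finset.mul_sum]

/-- `ker (ρ_{0r})` for the (open) Vietoris–Rips graph `VR d r`. -/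
noncomputable def kerVR {Z : Type*} [Fintype Z] (d : Z → Z → ℝ≥0) (r : ℝ≥0) :
    Submodule (ZMod 2) (Z → ZMod 2) := LinearMap.ker (rho (VR d r))

/-- `ker⁺_b`: kernel of `ρ_{0b}`.  For `b > 0` this is `ker (ρ_{0b})` of `VR d b`;
at `b = 0` it is the span of the classes `[z_j] + [z_i]` with `d z_i z_j = 0`. -/
noncomputable def kerP {Z : Type*} [Fintype Z] (d : Z → Z → ℝ≥0) (b : ℝ≥0) :
    Submodule (ZMod 2) (Z → ZMod 2) := LinearMap.ker (rho (VRc d b))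

/-- `ker⁻_b = ⋃_{0 ≤ r < b} ker (ρ_{0r})`, as a submodule (the union is increasing). -/
noncomputable def kerM {Z : Type*} [Fintype Z] (d : Z → Z → ℝ≥0) (b : ℝ≥0) :
    Submodule (ZMod 2) (Z → ZMod 2) := ⨆ r : {r : ℝ≥0 // r < b}, kerVR d (r : ℝ≥0)

/-- Multiplicity of the death value `a` in the barcode: `m(a) = dim ker⁺_a − dim ker⁻_a`. -/
noncomputable def mult {Z : Type*} [Fintype Z] (d : Z → Z → ℝ≥0) (a : ℝ≥0) : ℕ :=
  finrank (ZMod 2) (kerP d a) - finrank (ZMod 2) (kerM d a)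

/-- The induced block function `M_f(a,b)` for the identity relabelling bijection
`f : (Fin n, dX) → (Fin n, dZ)`, `x_i ↦ z_i` (so that `f₀ = id` on `H₀(VR₀)`):
`dim ((f₀ ker⁺_a(X) ∩ ker⁺_b(Z)) / (f₀ ker⁻_a(X) ∩ ker⁺_b(Z) + f₀ ker⁺_a(X) ∩ ker⁻_b(Z)))`. -/
noncomputable def blockFn {Z : Type*} [Fintype Z] (dX dZ : Z → Z → ℝ≥0) (a b : ℝ≥0) : ℕ :=
  finrank (ZMod 2)
    ((↥(kerP dX a ⊓ kerP dZ b)) ⧸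
      ((kerM dX a ⊓ kerP dZ b ⊔ kerP dX a ⊓ kerM dZ b).comap
        (kerP dX a ⊓ kerP dZ b).subtype))


lemma ker_rho_mono {Z : Type*} [Fintype Z] {G H : SimpleGraph Z} (h : G ≤ H) :
    LinearMap.ker (rho G) ≤ LinearMap.ker (rho H) := by
  classical
  have : Fintype G.ConnectedComponent := Fintype.ofFinite _
  intro v hv
  rw [LinearMap.mem_ker] at hv ⊢
  funext c
  have hv' : ∀ c', ∑ z ∈ Finset.univ.filter (fun z => G.connectedComponentMk z = c'), v z = 0 := by
    intro c'
    have := congrFun hv c'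
    simpa [rho] using this
  have hrw : (rho H) v c
      = ∑ z ∈ Finset.univ.filter (fun z => H.connectedComponentMk z = c), v z := by
    simp [rho]
  rw [Pi.zero_apply, hrw]
  rw [← Finset.sum_fiberwise_of_maps_to (g := fun z => G.connectedComponentMk z)
    (t := (Finset.univ : Finset G.ConnectedComponent)) (fun i _ => Finset.mem_univ _) v]
  apply Finset.sum_eq_zero
  intro c' _
  by_cases hc : c'.map (SimpleGraph.Hom.ofLE h) = c
  · have hset : ((Finset.univ.filter (fun z => H.connectedComponentMk z = c)).filter
        (fun z => G.connectedComponentMk z = c'))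
        = Finset.univ.filter (fun z => G.connectedComponentMk z = c') := by
      ext z
      simp only [Finset.mem_filter, Finset.mem_univ, true_and]
      constructor
      · exact fun hz => hz.2
      · intro hz
        refine ⟨?_, hz⟩
        have h1 : (G.connectedComponentMk z).map (SimpleGraph.Hom.ofLE h)
            = H.connectedComponentMk z := rfl
        rw [← hc, ← hz, h1]
    rw [hset]
    exact hv' c'
  · have hset : ((Finset.univ.filter (fun z => H.connectedComponentMk z = c)).filter
        (fun z => G.connectedComponentMk z = c')) = ∅ := by
      ext z
      simp only [Finset.mem_filter, Finset.mem_univ, true_and, Finset.notMem_empty, iff_false,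
        not_and]
      intro hzc hzc'
      apply hc
      have h1 : (G.connectedComponentMk z).map (SimpleGraph.Hom.ofLE h)
          = H.connectedComponentMk z := rfl
      rw [← hzc', h1, hzc]
    rw [hset, Finset.sum_empty]

lemma VRc_mono' {Z : Type*} (d : Z → Z → ℝ≥0) {r s : ℝ≥0} (hrs : r ≤ s) :
    VRc d r ≤ VRc d s := by
  intro a b hab
  exact ⟨hab.1, hab.2.1.trans hrs, hab.2.2.trans hrs⟩

lemma VR_le_VRc' {Z : Type*} (d : Z → Z → ℝ≥0) {r s : ℝ≥0} (hrs : r ≤ s) :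
    VR d r ≤ VRc d s := by
  intro a b hab
  exact ⟨hab.1, hab.2.2.1.trans hrs, hab.2.2.2.trans hrs⟩

lemma VR_eq_VRc' {Z : Type*} (d : Z → Z → ℝ≥0) {r : ℝ≥0} (hr : 0 < r) :
    VR d r = VRc d r := by
  ext a b
  exact ⟨fun h => ⟨h.1, h.2.2.1, h.2.2.2⟩, fun h => ⟨h.1, hr, h.2.1, h.2.2⟩⟩

lemma VRc_gap' {Z : Type*} (d : Z → Z → ℝ≥0) {c c' : ℝ≥0} (hcc : c ≤ c')
    (hgap : ∀ i j, d i j ≤ c' → d i j ≤ c) : VRc d c = VRc d c' := by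
  ext a b
  exact ⟨fun h => ⟨h.1, h.2.1.trans hcc, h.2.2.trans hcc⟩,
    fun h => ⟨h.1, hgap _ _ h.2.1, hgap _ _ h.2.2⟩⟩

lemma kerP_mono' {Z : Type*} [Fintype Z] (d : Z → Z → ℝ≥0) {r s : ℝ≥0} (h : r ≤ s) :
    kerP d r ≤ kerP d s := ker_rho_mono (VRc_mono' d h)

lemma kerVR_le_kerP' {Z : Type*} [Fintype Z] (d : Z → Z → ℝ≥0) {r s : ℝ≥0} (h : r ≤ s) :
    kerVR d r ≤ kerP d s := ker_rho_mono (VR_le_VRc' d h)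

lemma kerVR_eq_kerP' {Z : Type*} [Fintype Z] (d : Z → Z → ℝ≥0) {r : ℝ≥0} (hr : 0 < r) :
    kerVR d r = kerP d r := by
  exact congrArg (fun G => LinearMap.ker (rho G)) (VR_eq_VRc' d hr)

lemma kerP_gap' {Z : Type*} [Fintype Z] (d : Z → Z → ℝ≥0) {c c' : ℝ≥0} (hcc : c ≤ c')
    (hgap : ∀ i j, d i j ≤ c' → d i j ≤ c) : kerP d c = kerP d c' := by
  exact congrArg (fun G => LinearMap.ker (rho G)) (VRc_gap' d hcc hgap)

lemma kerM_le_kerP' {Z : Type*} [Fintype Z] (d : Z → Z → ℝ≥0) (b : ℝ≥0) :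
    kerM d b ≤ kerP d b := by
  apply iSup_le
  rintro ⟨r, hr⟩
  exact kerVR_le_kerP' d hr.le

lemma kerM_zero' {Z : Type*} [Fintype Z] (d : Z → Z → ℝ≥0) : kerM d 0 = ⊥ := by
  have : IsEmpty {r : ℝ≥0 // r < 0} := ⟨fun x => absurd x.2 (by simp)⟩
  exact iSup_of_empty _

lemma dim_block {K V : Type*} [Field K] [AddCommGroup V] [Module K V] [FiniteDimensional K V]
    {A B W W' : Submodule K V} (hBA : B ≤ A) (hW : W' ≤ W) :
    finrank K ((↥(A ⊓ W)) ⧸ ((B ⊓ W ⊔ A ⊓ W').comap (A ⊓ W).subtype))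
      + finrank K ↥(A ⊓ W' ⊔ B) = finrank K ↥(A ⊓ W ⊔ B) := by
  have hQP : B ⊓ W ⊔ A ⊓ W' ≤ A ⊓ W :=
    sup_le (inf_le_inf_right W hBA) (inf_le_inf_left A hW)
  have e1 := Submodule.finrank_quotient_add_finrank ((B ⊓ W ⊔ A ⊓ W').comap (A ⊓ W).subtype)
  have e1' : finrank K ↥((B ⊓ W ⊔ A ⊓ W').comap (A ⊓ W).subtype)
      = finrank K ↥(B ⊓ W ⊔ A ⊓ W') :=
    (Submodule.comapSubtypeEquivOfLe hQP).finrank_eq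
  have e2 := Submodule.finrank_sup_add_finrank_inf_eq (A ⊓ W) B
  have e3 := Submodule.finrank_sup_add_finrank_inf_eq (B ⊓ W) (A ⊓ W')
  have e4 := Submodule.finrank_sup_add_finrank_inf_eq (A ⊓ W') B
  have i2 : A ⊓ W ⊓ B = B ⊓ W :=
    le_antisymm (le_inf inf_le_right (inf_le_left.trans inf_le_right))
      (le_inf (le_inf (inf_le_left.trans hBA) inf_le_right) inf_le_left)
  have i3 : B ⊓ W ⊓ (A ⊓ W') = B ⊓ W' :=
    le_antisymm (le_inf (inf_le_left.trans inf_le_left) (inf_le_right.trans inf_le_right))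
      (le_inf (le_inf inf_le_left (inf_le_right.trans hW))
        (le_inf (inf_le_left.trans hBA) inf_le_right))
  have i4 : A ⊓ W' ⊓ B = B ⊓ W' :=
    le_antisymm (le_inf inf_le_right (inf_le_left.trans inf_le_right))
      (le_inf (le_inf (inf_le_left.trans hBA) inf_le_right) inf_le_left)
  rw [i2] at e2
  rw [i3] at e3
  rw [i4] at e4
  rw [e1'] at e1
  omega



set_option maxHeartbeats 1000000 in
lemma marginal {n : ℕ} (dX dZ : Fin n → Fin n → ℝ≥0) (a : ℝ≥0) :
    ∑ᶠ b : ℝ≥0, blockFn dX dZ a b = mult dX a := by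
  classical
  set A := kerP dX a with hA
  set B := kerM dX a with hB
  have hBA : B ≤ A := kerM_le_kerP' dX a
  set D : Finset ℝ≥0 :=
    insert 0 ((Finset.univ ×ˢ Finset.univ).image fun p : Fin n × Fin n => dZ p.1 p.2) with hD
  have hD0 : (0 : ℝ≥0) ∈ D := Finset.mem_insert_self _ _
  have hmemD : ∀ i j, dZ i j ∈ D := fun i j =>
    Finset.mem_insert_of_mem (Finset.mem_image.mpr ⟨(i, j), by simp⟩)
  have hKI : ∀ b, blockFn dX dZ a b + finrank (ZMod 2) ↥(A ⊓ kerM dZ b ⊔ B)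
      = finrank (ZMod 2) ↥(A ⊓ kerP dZ b ⊔ B) := fun b =>
    dim_block hBA (kerM_le_kerP' dZ b)
  have hMchar : ∀ b : ℝ≥0, 0 < b → ∀ hne : (D.filter (· < b)).Nonempty,
      kerM dZ b = kerP dZ ((D.filter (· < b)).max' hne) := by
    intro b hb hne
    set c := (D.filter (· < b)).max' hne with hc
    have hcb : c < b := (Finset.mem_filter.mp ((D.filter (· < b)).max'_mem hne)).2
    have hgapb : ∀ r : ℝ≥0, r < b → ∀ i j, dZ i j ≤ r → dZ i j ≤ c := by
      intro r hrb i j hij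
      rw [hc]
      have hm : dZ i j ∈ D.filter (· < b) :=
        Finset.mem_filter.mpr ⟨hmemD i j, lt_of_le_of_lt hij hrb⟩
      exact Finset.le_max' _ _ hm
    apply le_antisymm
    · apply iSup_le
      rintro ⟨r, hrb⟩
      by_cases hrc : r ≤ c
      · exact kerVR_le_kerP' dZ hrc
      · push_neg at hrc
        rw [kerVR_eq_kerP' dZ (lt_of_le_of_lt (zero_le : (0:ℝ≥0) ≤ c) hrc)]
        exact le_of_eq (kerP_gap' dZ hrc.le (hgapb r hrb)).symm
    · obtain ⟨r, hcr, hrb⟩ := exists_between hcb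
      have h0r : 0 < r := lt_of_le_of_lt (zero_le : (0:ℝ≥0) ≤ c) hcr
      have heq : kerP dZ c = kerVR dZ r := by
        rw [kerP_gap' dZ hcr.le (hgapb r hrb), kerVR_eq_kerP' dZ h0r]
      rw [heq]
      exact le_iSup (fun r : {r : ℝ≥0 // r < b} => kerVR dZ (r : ℝ≥0)) ⟨r, hrb⟩
  have hsupp : ∀ b : ℝ≥0, b ∉ D → blockFn dX dZ a b = 0 := by
    intro b hbD
    have hbne : b ≠ 0 := fun h => hbD (h ▸ hD0)
    have hb0 : 0 < b := lt_of_le_of_ne (zero_le : (0:ℝ≥0) ≤ b) (Ne.symm hbne)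
    have hne : (D.filter (· < b)).Nonempty := ⟨0, Finset.mem_filter.mpr ⟨hD0, hb0⟩⟩
    set c := (D.filter (· < b)).max' hne with hc
    have hcb : c < b := (Finset.mem_filter.mp ((D.filter (· < b)).max'_mem hne)).2
    have h1 : kerP dZ c = kerP dZ b := by
      apply kerP_gap' dZ hcb.le
      intro i j hij
      have hne' : dZ i j ≠ b := fun he => hbD (he ▸ hmemD i j)
      have hm : dZ i j ∈ D.filter (· < b) :=
        Finset.mem_filter.mpr ⟨hmemD i j, lt_of_le_of_ne hij hne'⟩
      rw [hc]
      exact Finset.le_max' _ _ hm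
    have h2 := hMchar b hb0 hne
    have hkey := hKI b
    rw [h2, ← hc, h1] at hkey
    omega
  have tele : ∀ k : ℕ, ∀ t : ℝ≥0, t ∈ D → (D.filter (· < t)).card = k →
      (∑ b ∈ D.filter (· ≤ t), blockFn dX dZ a b) + finrank (ZMod 2) ↥B
        = finrank (ZMod 2) ↥(A ⊓ kerP dZ t ⊔ B) := by
    intro k
    induction k using Nat.strong_induction_on with
    | _ k ih =>
      intro t ht hcard
      by_cases hne : (D.filter (· < t)).Nonempty
      · set c := (D.filter (· < t)).max' hne with hc
        have hcD : c ∈ D := (Finset.mem_filter.mp (Finset.max'_mem _ hne)).1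
        have hct : c < t := (Finset.mem_filter.mp (Finset.max'_mem _ hne)).2
        have ht0 : 0 < t := lt_of_le_of_lt (zero_le : (0:ℝ≥0) ≤ c) hct
        have hsplit : D.filter (· ≤ t) = insert t (D.filter (· ≤ c)) := by
          ext x
          simp only [Finset.mem_filter, Finset.mem_insert]
          constructor
          · rintro ⟨hxD, hxt⟩
            rcases eq_or_lt_of_le hxt with h | h
            · exact Or.inl h
            · refine Or.inr ⟨hxD, ?_⟩
              have hm : x ∈ D.filter (· < t) := Finset.mem_filter.mpr ⟨hxD, h⟩
              rw [hc]
              exact Finset.le_max' _ _ hm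
          · rintro (rfl | ⟨hxD, hxc⟩)
            · exact ⟨ht, le_refl x⟩
            · exact ⟨hxD, hxc.trans hct.le⟩
        have htnot : t ∉ D.filter (· ≤ c) := by
          simp only [Finset.mem_filter]
          rintro ⟨-, h⟩
          exact absurd (lt_of_le_of_lt h hct) (lt_irrefl t)
        have hcardlt : (D.filter (· < c)).card < k := by
          rw [← hcard]
          apply Finset.card_lt_card
          constructor
          · intro x hx
            simp only [Finset.mem_filter] at hx ⊢
            exact ⟨hx.1, hx.2.trans hct⟩
          · intro hsub
            have hcc : c ∈ D.filter (· < c) := hsub (Finset.mem_filter.mpr ⟨hcD, hct⟩)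
            simp [Finset.mem_filter] at hcc
        have IH := ih _ hcardlt c hcD rfl
        have hM := hMchar t ht0 hne
        have hkey := hKI t
        rw [hM, ← hc] at hkey
        rw [hsplit, Finset.sum_insert htnot]
        omega
      · have ht0 : t = 0 := by
          by_contra h
          exact hne ⟨0, Finset.mem_filter.mpr ⟨hD0, lt_of_le_of_ne (zero_le : (0:ℝ≥0) ≤ t) (Ne.symm h)⟩⟩
        subst ht0
        have hsingle : D.filter (· ≤ (0 : ℝ≥0)) = {0} := by
          ext x
          simp only [Finset.mem_filter, Finset.mem_singleton, le_zero_iff]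
          exact ⟨fun h => h.2, fun h => ⟨h ▸ hD0, h⟩⟩
        rw [hsingle, Finset.sum_singleton]
        have hkey := hKI 0
        rw [kerM_zero' dZ, inf_bot_eq, bot_sup_eq] at hkey
        exact hkey
  have hDne : D.Nonempty := ⟨0, hD0⟩
  set T := D.max' hDne with hT
  have hfilT : D.filter (· ≤ T) = D := by
    ext x
    simp only [Finset.mem_filter]
    exact ⟨fun h => h.1, fun h => ⟨h, Finset.le_max' _ _ h⟩⟩
  have htop : A ≤ kerP dZ T := by
    have hcomp : VRc dZ T = (⊤ : SimpleGraph (Fin n)) := by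
      ext i j
      constructor
      · exact fun h => h.1
      · exact fun h => ⟨h, Finset.le_max' _ _ (hmemD i j), Finset.le_max' _ _ (hmemD j i)⟩
    have : kerP dZ T = LinearMap.ker (rho (⊤ : SimpleGraph (Fin n))) :=
      congrArg (fun G => LinearMap.ker (rho G)) hcomp
    rw [this, hA]
    exact ker_rho_mono le_top
  have hmain := tele _ T (D.max'_mem hDne) rfl
  rw [hfilT] at hmain
  have hAT : A ⊓ kerP dZ T ⊔ B = A := by rw [inf_eq_left.mpr htop, sup_eq_left.mpr hBA]
  rw [hAT] at hmain
  have hsum : ∑ᶠ b : ℝ≥0, blockFn dX dZ a b = ∑ b ∈ D, blockFn dX dZ a b := by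
    apply finsum_eq_sum_of_support_subset
    intro b hb
    by_contra hbD
    exact hb (hsupp b hbD)
  have hfr : finrank (ZMod 2) ↥B ≤ finrank (ZMod 2) ↥A := Submodule.finrank_mono hBA
  have hmult : mult dX a = finrank (ZMod 2) ↥A - finrank (ZMod 2) ↥B := rfl
  rw [hsum, hmult]
  omega


lemma blockFn_symm {Z : Type*} [Fintype Z] (dX dZ : Z → Z → ℝ≥0) (a b : ℝ≥0) :
    blockFn dX dZ a b = blockFn dZ dX b a := by
  have h1 : kerP dX a ⊓ kerP dZ b = kerP dZ b ⊓ kerP dX a := inf_comm _ _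
  have h2 : kerM dX a ⊓ kerP dZ b ⊔ kerP dX a ⊓ kerM dZ b
      = kerM dZ b ⊓ kerP dX a ⊔ kerP dZ b ⊓ kerM dX a := by
    rw [inf_comm (kerM dX a), inf_comm (kerP dX a), sup_comm]
  unfold blockFn
  exact congrArg₂
    (fun (P Q : Submodule (ZMod 2) (Z → ZMod 2)) =>
      finrank (ZMod 2) ((↥P) ⧸ (Q.comap P.subtype))) h1 h2

/-- the marginals of the induced block function are the barcode
multiplicities: `Σ_b M_f(a,b) = m^X(a)` and `Σ_a M_f(a,b) = m^Z(b)`. -/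
theorem stmt9 {n : ℕ} (dX dZ : Fin n → Fin n → ℝ≥0)
    (hsX : ∀ i j, dX i j = dX j i) (hsZ : ∀ i j, dZ i j = dZ j i) :
    (∀ a : ℝ≥0, ∑ᶠ b : ℝ≥0, blockFn dX dZ a b = mult dX a) ∧
    (∀ b : ℝ≥0, ∑ᶠ a : ℝ≥0, blockFn dX dZ a b = mult dZ b) := by
  constructor
  · intro a
    exact marginal dX dZ a
  · intro b
    have h : ∑ᶠ a : ℝ≥0, blockFn dX dZ a b = ∑ᶠ a : ℝ≥0, blockFn dZ dX b a :=
      finsum_congr fun a => blockFn_symm dX dZ a b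
    rw [h]
    exact marginal dZ dX b
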